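/- The image of any infinite binary word under the morphism 0 → 0001011, 1 → 1001011 is an infinite binary word w such that for every factor x of w with |x| ≥ 6, the reversal x^R is not a factor of w; in particular, applying this morphism to the Thue–Morse word yields an aperiodic infinite binary word with this property. -/

import Mathlib

/-- `l` is a prefix of the infinite word `w`. -/
def IsPrefixOfInf {α : Type*} (l : List α) (w : ℕ → α) : Prop :=
  ∀ (i : ℕ) (h : i < l.length), l[i] = w i

/-- `b` is the image of the infinite word `a` under the morphism `γ`
(extended to infinite words by concatenation). -/
def IsInfImage {α β : Type*} (γ : α → List β) (a : ℕ → α) (b : ℕ → β) : Prop :=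
  ∀ n : ℕ, IsPrefixOfInf (((List.range n).map a).flatMap γ) b

/-- `w = y · z^ω`. -/
def UltPeriodicWith {α : Type*} (w : ℕ → α) (y z : List α) : Prop :=
  z ≠ [] ∧ ∀ m : ℕ, IsPrefixOfInf (y ++ (List.replicate m z).flatten) w

def UltimatelyPeriodic {α : Type*} (w : ℕ → α) : Prop :=
  ∃ y z : List α, UltPeriodicWith w y z

/-- `x` is a (finite, contiguous) factor of the infinite word `w`. -/
def InfFactorOf {α : Type*} (x : List α) (w : ℕ → α) : Prop :=
  ∃ i : ℕ, x = List.ofFn fun j : Fin x.length => w (i + j)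

/-- adherence of a language -/
def Adherence {α : Type*} (L : Set (List α)) : Set (ℕ → α) :=
  {x | ∀ n : ℕ, ∃ w ∈ L, (List.ofFn fun i : Fin n => x i) <+: w}

/-- The Thue–Morse word: `t n` is the parity of the number of 1s in the
binary expansion of `n`. -/
def thueMorse (n : ℕ) : Fin 2 :=
  ⟨(Nat.digits 2 n).count 1 % 2, Nat.mod_lt _ (by norm_num)⟩
section Stmt19Aux

abbrev γm : Fin 2 → List (Fin 2) := ![[0, 0, 0, 1, 0, 1, 1], [1, 0, 0, 1, 0, 1, 1]]

def pat (b : Fin 2) (r : ℕ) : Fin 2 :=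
  if r = 0 then b else if r = 3 ∨ r = 5 ∨ r = 6 then 1 else 0

lemma γm_len (c : Fin 2) : (γm c).length = 7 := by fin_cases c <;> rfl

lemma flat_len (a : ℕ → Fin 2) (n : ℕ) :
    (((List.range n).map a).flatMap γm).length = 7 * n := by
  induction n with
  | zero => rfl
  | succ n ih =>
    rw [List.range_succ, List.map_append, List.flatMap_append, List.length_append, ih]
    simp [γm_len (a n)]
    omega

lemma w_elt {a w : ℕ → Fin 2} (h : IsInfImage γm a w) (q r : ℕ) (hr : r < 7) :
    w (7 * q + r) = (γm (a q))[r]'(by rw [γm_len]; exact hr) := by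
  have h1 := h (q + 1) (7 * q + r) (by rw [flat_len]; omega)
  rw [← h1]
  have e : ((List.range (q+1)).map a).flatMap γm
      = ((List.range q).map a).flatMap γm ++ (γm (a q) ++ []) := by
    rw [List.range_succ, List.map_append, List.flatMap_append]
    rfl
  rw [List.getElem_of_eq e (by rw [flat_len] at *; omega),
    List.getElem_append_right (by rw [flat_len]; omega)]
  have e2 : 7 * q + r - (((List.range q).map a).flatMap γm).length = r := by
    rw [flat_len]; omega
  simp only [List.append_nil]
  congr 1

lemma γ_pat (c : Fin 2) (r : ℕ) (hr : r < 7) :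
    (γm c)[r]'(by rw [γm_len]; exact hr) = pat c r := by
  interval_cases r <;> fin_cases c <;> rfl

lemma pat_indep (b b' : Fin 2) (r : ℕ) (hr : r ≠ 0) : pat b r = pat b' r := by
  simp [pat, hr]

lemma w_pat {a w : ℕ → Fin 2} (h : IsInfImage γm a w) (n : ℕ) :
    w n = pat (a (n / 7)) (n % 7) := by
  have hr : n % 7 < 7 := Nat.mod_lt _ (by norm_num)
  have := w_elt h (n / 7) (n % 7) hr
  rw [Nat.div_add_mod] at this
  rw [this, γ_pat _ _ hr]

lemma key : ∀ (r r' : Fin 7) (b b' : Fin 2), ∃ k : Fin 6,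
    pat b ((r.val + k.val) % 7) ≠ pat b' ((r'.val + (5 - k.val)) % 7) := by decide

lemma window {a w : ℕ → Fin 2} (h : IsInfImage γm a w) (s : ℕ) :
    ∃ b : Fin 2, ∀ k < 6, w (s + k) = pat b ((s + k) % 7) := by
  refine ⟨a ((s + (7 - s % 7) % 7) / 7), fun k hk => ?_⟩
  rw [w_pat h]
  by_cases h0 : (s + k) % 7 = 0
  · have : k = (7 - s % 7) % 7 := by omega
    rw [this]
  · exact pat_indep _ _ _ h0

lemma no_rev {a w : ℕ → Fin 2} (h : IsInfImage γm a w) (s s' : ℕ)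
    (heq : ∀ k < 6, w (s + k) = w (s' + (5 - k))) : False := by
  obtain ⟨b, hb⟩ := window h s
  obtain ⟨b', hb'⟩ := window h s'
  obtain ⟨k, hk⟩ := key ⟨s % 7, Nat.mod_lt _ (by norm_num)⟩
    ⟨s' % 7, Nat.mod_lt _ (by norm_num)⟩ b b'
  apply hk
  have e1 : (s % 7 + k.val) % 7 = (s + k.val) % 7 := by omega
  have e2 : (s' % 7 + (5 - k.val)) % 7 = (s' + (5 - k.val)) % 7 := by omega
  simp only [e1, e2]
  rw [← hb k.val (by omega), ← hb' (5 - k.val) (by omega)]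
  exact heq k.val k.isLt

lemma rep_len {α : Type*} (z : List α) (m : ℕ) :
    ((List.replicate m z).flatten).length = m * z.length := by
  induction m with
  | zero => simp
  | succ m ih =>
    rw [List.replicate_succ, List.flatten_cons, List.length_append, ih]
    ring

lemma flatten_rep_get {α : Type*} (z : List α) (hz : z ≠ []) (m j : ℕ)
    (hj : j < ((List.replicate m z).flatten).length) :
    (List.replicate m z).flatten[j] =
      z[j % z.length]'(Nat.mod_lt _ (List.length_pos_iff.mpr hz)) := by
  induction m generalizing j with
  | zero => simp at hj
  | succ m ih =>
    have e : (List.replicate (m + 1) z).flatten = z ++ (List.replicate m z).flatten := by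
      rw [List.replicate_succ, List.flatten_cons]
    rw [e] at hj
    rw [List.getElem_of_eq e hj]
    by_cases hlt : j < z.length
    · rw [List.getElem_append_left hlt]
      congr 1
      exact (Nat.mod_eq_of_lt hlt).symm
    · rw [List.getElem_append_right (le_of_not_gt hlt)]
      rw [ih (j - z.length) (by rw [List.length_append] at hj; omega)]
      congr 1
      conv_rhs => rw [show j = z.length + (j - z.length) by omega, Nat.add_mod_left]

lemma per {w : ℕ → Fin 2} {y z : List (Fin 2)} (h : UltPeriodicWith w y z) :
    ∀ n, y.length ≤ n → w (n + z.length) = w n := by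
  obtain ⟨hz, hp⟩ := h
  intro n hn
  have hp0 : 0 < z.length := List.length_pos_iff.mpr hz
  set p := z.length with hpdef
  set m := n + p + 1 with hm
  have hmp : m ≤ m * p := Nat.le_mul_of_pos_right m hp0
  have hlen : (y ++ (List.replicate m z).flatten).length = y.length + m * p := by
    rw [List.length_append, rep_len]
  have h1 := hp m n (by rw [hlen]; omega)
  have h2 := hp m (n + p) (by rw [hlen]; omega)
  rw [← h1, ← h2]
  rw [List.getElem_append_right hn, List.getElem_append_right (by omega)]
  rw [flatten_rep_get z hz, flatten_rep_get z hz]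
  congr 1
  rw [show n + p - y.length = (n - y.length) + p by omega, Nat.add_mod_right]

def tm (n : ℕ) : ℕ := (Nat.digits 2 n).count 1 % 2

lemma tm_lt (n : ℕ) : tm n < 2 := Nat.mod_lt _ (by norm_num)

lemma tm_two_mul (n : ℕ) : tm (2 * n) = tm n := by
  rcases Nat.eq_zero_or_pos n with h | h
  · simp [h]
  · unfold tm
    rw [Nat.digits_def' (by norm_num : (1:ℕ) < 2) (by omega),
      show (2 * n) % 2 = 0 by omega, show 2 * n / 2 = n by omega,
      List.count_cons]
    norm_num

lemma tm_two_mul_add_one (n : ℕ) : tm (2 * n + 1) = (tm n + 1) % 2 := by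
  unfold tm
  rw [Nat.digits_def' (by norm_num : (1:ℕ) < 2) (by omega),
    show (2 * n + 1) % 2 = 1 by omega, show (2 * n + 1) / 2 = n by omega,
    List.count_cons]
  simp [Nat.add_mod]

lemma tm_pow (k : ℕ) : tm (2 ^ k) = 1 := by
  induction k with
  | zero =>
    show (Nat.digits 2 1).count 1 % 2 = 1
    norm_num
  | succ k ih =>
    rw [pow_succ, mul_comm, tm_two_mul]
    exact ih

lemma tm_three_pow (k : ℕ) : tm (3 * 2 ^ k) = 0 := by
  induction k with
  | zero =>
    show (Nat.digits 2 3).count 1 % 2 = 0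
    norm_num
  | succ k ih =>
    rw [pow_succ, show 3 * (2 ^ k * 2) = 2 * (3 * 2 ^ k) by ring, tm_two_mul]
    exact ih

lemma tm_not_per : ∀ p, 1 ≤ p → ¬ ∃ N, ∀ q, N ≤ q → tm (q + p) = tm q := by
  intro p
  induction p using Nat.strong_induction_on with
  | _ p ih =>
    rintro hp ⟨N, hN⟩
    rcases Nat.even_or_odd p with ⟨p', hp'⟩ | ⟨s, hs⟩
    · refine ih p' (by omega) (by omega) ⟨N, fun q hq => ?_⟩
      have h1 := hN (2 * q) (by omega)
      rw [show 2 * q + p = 2 * (q + p') by omega, tm_two_mul, tm_two_mul] at h1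
      exact h1
    · have step : ∀ m, N ≤ m → tm (m + s + 1) = tm (m + s) := by
        intro m hm
        have h1 := hN (2 * m) (by omega)
        have h2 := hN (2 * m + 1) (by omega)
        rw [show 2 * m + p = 2 * (m + s) + 1 by omega, tm_two_mul_add_one,
          tm_two_mul] at h1
        rw [show 2 * m + 1 + p = 2 * (m + s + 1) by omega, tm_two_mul,
          tm_two_mul_add_one] at h2
        have l1 := tm_lt (m + s); have l2 := tm_lt m; have l3 := tm_lt (m + s + 1)
        omega
      have const : ∀ n, N + s ≤ n → tm n = tm (N + s) := by
        intro n hn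
        induction n with
        | zero => rw [show N + s = 0 by omega]
        | succ n ihn =>
          rcases Nat.lt_or_ge n (N + s) with h | h
          · rw [show n + 1 = N + s by omega]
          · have hst := step (n - s) (by omega)
            rw [show n - s + s = n by omega] at hst
            rw [hst, ihn h]
      have hk : N + s ≤ 2 ^ (N + s) := le_of_lt Nat.lt_two_pow_self
      have c1 := const (2 ^ (N + s)) hk
      have c2 := const (3 * 2 ^ (N + s)) (by omega)
      rw [tm_pow] at c1
      rw [tm_three_pow] at c2
      omega

lemma γ_zero (c : Fin 2) : (γm c)[0]'(by rw [γm_len]; norm_num) = c := by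
  fin_cases c <;> rfl

end Stmt19Aux

theorem stmt19 :
    (∀ (a : ℕ → Fin 2) (w : ℕ → Fin 2),
      IsInfImage (![[0, 0, 0, 1, 0, 1, 1], [1, 0, 0, 1, 0, 1, 1]]) a w →
      ∀ x : List (Fin 2), InfFactorOf x w → 6 ≤ x.length → ¬ InfFactorOf x.reverse w) ∧
    (∀ w : ℕ → Fin 2,
      IsInfImage (![[0, 0, 0, 1, 0, 1, 1], [1, 0, 0, 1, 0, 1, 1]]) thueMorse w →
      ¬ UltimatelyPeriodic w) := by
  constructor
  · intro a w h x hx hL hrx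
    obtain ⟨i, hi⟩ := hx
    obtain ⟨i', hi'⟩ := hrx
    set L := x.length with hLdef
    have hget : ∀ j, j < L → x.getD j 0 = w (i + j) := by
      intro j hj
      rw [List.getD_eq_getElem x 0 hj, List.getElem_of_eq hi (by simpa using hj),
        List.getElem_ofFn]
    have hrev : ∀ j, j < L → x.getD (L - 1 - j) 0 = w (i' + j) := by
      intro j hj
      have hj' : j < x.reverse.length := by simpa using hj
      have h2 := List.getElem_of_eq hi' hj'
      rw [List.getElem_reverse, List.getElem_ofFn] at h2
      rw [List.getD_eq_getElem x 0 (by omega)]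
      exact h2
    refine no_rev h (i + (L - 6)) i' (fun k hk => ?_)
    have h1 := hget (L - 6 + k) (by omega)
    have h2 := hrev (5 - k) (by omega)
    rw [show L - 1 - (5 - k) = L - 6 + k by omega] at h2
    rw [show i + (L - 6) + k = i + (L - 6 + k) by omega, ← h1, ← h2]
  · intro w him hper
    obtain ⟨y, z, hup⟩ := hper
    have hz1 : 1 ≤ z.length := List.length_pos_iff.mpr hup.1
    have hw0 : ∀ q, w (7 * q) = thueMorse q := by
      intro q
      have h0 := w_elt him q 0 (by norm_num)
      rw [Nat.add_zero] at h0
      rw [h0, γ_zero]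
    have hper' := per hup
    have iter : ∀ q, y.length ≤ q → ∀ j, w (7 * q + j * z.length) = w (7 * q) := by
      intro q hq j
      induction j with
      | zero => simp
      | succ j ihj =>
        rw [show 7 * q + (j + 1) * z.length = (7 * q + j * z.length) + z.length by ring,
          hper' _ (le_trans hq (le_trans (by omega) (Nat.le_add_right (7 * q) (j * z.length))))]
        exact ihj
    apply tm_not_per z.length hz1
    refine ⟨y.length, fun q hq => ?_⟩
    have h7 := iter q hq 7
    rw [show 7 * q + 7 * z.length = 7 * (q + z.length) by ring, hw0, hw0] at h7
    exact congrArg Fin.val h7
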